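/- Gross–Tucker theorem for Ore semigroup actions on k-graphs: Suppose α is a free action of an Ore semigroup S on a k-graph Σ admitting a fundamental domain F. Let q : Σ → S\Σ be the quotient map, and define c : S\Σ → F by q(c(λ)) = λ, η : S\Σ → S by s(c(λ)) = α_{η(λ)}(c(s(λ))), and ξ : Σ → S by σ = α_{ξ(σ)}(c(q(σ))). Then η is a functor into S, and φ(σ) := (q(σ), ξ(σ)) is a k-graph isomorphism of Σ onto the skew product (S\Σ) ×_η S with inverse φ⁻¹(λ,t) = α_t(c(λ)), satisfying φ ∘ α_t = lt_t ∘ φ for all t ∈ S. -/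

import Mathlib

/-- The data of a `k`-graph: a small category with range `r`, source `s`,
identities `ι`, partially-defined composition `comp`, and a degree map `d` into `ℕ^k`. -/
structure KGraphData (k : ℕ) where
  Obj : Type
  Mor : Type
  r : Mor → Obj
  s : Mor → Obj
  ι : Obj → Mor
  comp : (p q : Mor) → s p = r q → Mor
  d : Mor → (Fin k → ℕ)

/-- The axioms making the data of a `k`-graph into an actual `k`-graph
(category axioms, functoriality of `d`, and the unique factorisation property). -/
structure IsKGraph {k : ℕ} (Λ : KGraphData k) : Prop where
  r_ι : ∀ v, Λ.r (Λ.ι v) = v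
  s_ι : ∀ v, Λ.s (Λ.ι v) = v
  d_ι : ∀ v, Λ.d (Λ.ι v) = 0
  r_comp : ∀ p q h, Λ.r (Λ.comp p q h) = Λ.r p
  s_comp : ∀ p q h, Λ.s (Λ.comp p q h) = Λ.s q
  d_comp : ∀ p q h, Λ.d (Λ.comp p q h) = Λ.d p + Λ.d q
  id_comp : ∀ (p : Λ.Mor) (h : Λ.s (Λ.ι (Λ.r p)) = Λ.r p), Λ.comp (Λ.ι (Λ.r p)) p h = p
  comp_id : ∀ (p : Λ.Mor) (h : Λ.s p = Λ.r (Λ.ι (Λ.s p))), Λ.comp p (Λ.ι (Λ.s p)) h = p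
  assoc : ∀ (p q t : Λ.Mor) (h1 : Λ.s p = Λ.r q) (h2 : Λ.s q = Λ.r t)
    (h3 : Λ.s (Λ.comp p q h1) = Λ.r t) (h4 : Λ.s p = Λ.r (Λ.comp q t h2)),
    Λ.comp (Λ.comp p q h1) t h3 = Λ.comp p (Λ.comp q t h2) h4
  factor : ∀ (l : Λ.Mor) (m n : Fin k → ℕ), Λ.d l = m + n →
    ∃! pq : Λ.Mor × Λ.Mor, ∃ h : Λ.s pq.1 = Λ.r pq.2,
      Λ.d pq.1 = m ∧ Λ.d pq.2 = n ∧ Λ.comp pq.1 pq.2 h = l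

/-- A morphism of `k`-graphs: a degree-preserving functor. -/
structure KGraphHom {k : ℕ} (Λ Sg : KGraphData k) where
  obj : Λ.Obj → Sg.Obj
  mor : Λ.Mor → Sg.Mor
  map_r : ∀ p, Sg.r (mor p) = obj (Λ.r p)
  map_s : ∀ p, Sg.s (mor p) = obj (Λ.s p)
  map_ι : ∀ v, mor (Λ.ι v) = Sg.ι (obj v)
  map_comp : ∀ (p q : Λ.Mor) (h : Λ.s p = Λ.r q) (h' : Sg.s (mor p) = Sg.r (mor q)),
    mor (Λ.comp p q h) = Sg.comp (mor p) (mor q) h'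
  map_d : ∀ p, Sg.d (mor p) = Λ.d p

/-- The skew-product `k`-graph `Λ ×_η S` determined by a functor `η : Λ → S`. -/
def KGraphData.skew {k : ℕ} (Λ : KGraphData k) (S : Type) [Monoid S] (η : Λ.Mor → S) :
    KGraphData k where
  Obj := Λ.Obj × S
  Mor := Λ.Mor × S
  r p := (Λ.r p.1, p.2)
  s p := (Λ.s p.1, p.2 * η p.1)
  ι v := (Λ.ι v.1, v.2)
  comp p q h := (Λ.comp p.1 q.1 (congrArg Prod.fst h), p.2)
  d p := Λ.d p.1

/-- `F` is a fundamental domain for the action `α` of `S` on (the morphisms of) `Sg`: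
every morphism is `α t μ` for exactly one pair `(μ, t) ∈ F × S`,
and `F` is closed under taking ranges. -/
def IsFundDomain {k : ℕ} (Sg : KGraphData k) (S : Type) [Monoid S]
    (α : S → Sg.Mor → Sg.Mor) (F : Set Sg.Mor) : Prop :=
  (∀ σ : Sg.Mor, ∃! p : Sg.Mor × S, p.1 ∈ F ∧ α p.2 p.1 = σ) ∧
    ∀ μ ∈ F, Sg.ι (Sg.r μ) ∈ F

/-- A Cuntz–Krieger `Λ`-family in a `*`-algebra. -/
structure IsCKFamily {k : ℕ} (Λ : KGraphData k) (A : Type*) [NonUnitalRing A] [StarRing A]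
    (T : Λ.Mor → A) : Prop where
  ck1_sa : ∀ v, star (T (Λ.ι v)) = T (Λ.ι v)
  ck1_idem : ∀ v, T (Λ.ι v) * T (Λ.ι v) = T (Λ.ι v)
  ck1_orth : ∀ v w, v ≠ w → T (Λ.ι v) * T (Λ.ι w) = 0
  ck2 : ∀ (p q : Λ.Mor) (h : Λ.s p = Λ.r q), T (Λ.comp p q h) = T p * T q
  ck3 : ∀ p, star (T p) * T p = T (Λ.ι (Λ.s p))
  ck4 : ∀ (v : Λ.Obj) (n : Fin k → ℕ) (F : Finset Λ.Mor),
    (∀ p, p ∈ F ↔ (Λ.r p = v ∧ Λ.d p = n)) →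
    T (Λ.ι v) = F.sum fun p => T p * star (T p)

/-- Row-finite: finitely many paths of each degree into each vertex. -/
def RowFinite {k : ℕ} (Λ : KGraphData k) : Prop :=
  ∀ (v : Λ.Obj) (n : Fin k → ℕ), {p : Λ.Mor | Λ.r p = v ∧ Λ.d p = n}.Finite

/-- No sources: every vertex receives a path of each degree. -/
def NoSources {k : ℕ} (Λ : KGraphData k) : Prop :=
  ∀ (v : Λ.Obj) (n : Fin k → ℕ), ∃ p : Λ.Mor, Λ.r p = v ∧ Λ.d p = n

/-- Gross–Tucker theorem for Ore semigroup actions on `k`-graphs: with `c`, `η`, `ξ`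
defined from a fundamental domain as in the paper, `η` is a functor and
`φ(σ) = (q(σ), ξ(σ))` is a `k`-graph isomorphism of `Σ` onto the skew product
`(S\Σ) ×_η S` with inverse `(λ, t) ↦ α_t(c(λ))`, satisfying `φ ∘ α_t = lt_t ∘ φ`. -/
theorem gross_tucker
    (k : ℕ) (Sg : KGraphData k) (hSg : IsKGraph Sg)
    (S : Type) [Monoid S] [IsCancelMul S]
    (hOre : ∀ t u : S, ∃ x y : S, x * t = y * u)
    (αo : S → Sg.Obj → Sg.Obj) (αm : S → Sg.Mor → Sg.Mor)
    (hhom : ∀ u : S, ∃ hom : KGraphHom Sg Sg, hom.obj = αo u ∧ hom.mor = αm u)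
    (hone_o : αo 1 = id) (hone_m : αm 1 = id)
    (hmul_o : ∀ t u : S, αo (t * u) = αo t ∘ αo u)
    (hmul_m : ∀ t u : S, αm (t * u) = αm t ∘ αm u)
    (hfree : ∀ (t u : S) (x : Sg.Mor), αm t x = αm u x → t = u)
    (F : Set Sg.Mor) (hF : IsFundDomain Sg S αm F)
    -- the quotient `k`-graph `Q = S\Σ` with quotient map `q`
    (Q : KGraphData k) (hQ : IsKGraph Q) (q : KGraphHom Sg Q)
    (hqsurj_m : Function.Surjective q.mor) (hqsurj_o : Function.Surjective q.obj)
    (hqker_m : ∀ x y : Sg.Mor, q.mor x = q.mor y ↔ ∃ t u : S, αm t x = αm u y)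
    (hqker_o : ∀ v w : Sg.Obj, q.obj v = q.obj w ↔ ∃ t u : S, αo t v = αo u w)
    -- the section `c : S\Σ → F` of `q`, its vertex version `cv`, and `η`, `ξ`
    (c : Q.Mor → Sg.Mor) (hcF : ∀ lam, c lam ∈ F) (hcq : ∀ lam, q.mor (c lam) = lam)
    (cv : Q.Obj → Sg.Obj) (hcv : ∀ w, Sg.ι (cv w) = c (Q.ι w))
    (η : Q.Mor → S) (hη : ∀ lam, Sg.s (c lam) = αo (η lam) (cv (Q.s lam)))
    (ξ : Sg.Mor → S) (hξ : ∀ σ : Sg.Mor, σ = αm (ξ σ) (c (q.mor σ)))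
    :
    (∀ w : Q.Obj, η (Q.ι w) = 1) ∧
    (∀ (p q' : Q.Mor) (h : Q.s p = Q.r q'), η (Q.comp p q' h) = η p * η q') ∧
    ∃ hom : KGraphHom Sg (Q.skew S η),
      hom.mor = (fun σ => (q.mor σ, ξ σ)) ∧
      hom.obj = (fun v => (q.obj v, ξ (Sg.ι v))) ∧
      Function.Bijective hom.mor ∧ Function.Bijective hom.obj ∧
      (∀ (lam : Q.Mor) (t : S), (q.mor (αm t (c lam)), ξ (αm t (c lam))) = (lam, t)) ∧
      (∀ (t : S) (σ : Sg.Mor),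
        (q.mor (αm t σ), ξ (αm t σ)) = (q.mor σ, t * ξ σ)) := by
  classical
  obtain ⟨huniq, hFr⟩ := hF
  -- basic action facts
  have hone_m' : ∀ x, αm 1 x = x := fun x => by rw [hone_m]; rfl
  have hone_o' : ∀ v, αo 1 v = v := fun v => by rw [hone_o]; rfl
  have hαmul : ∀ (t u : S) (x : Sg.Mor), αm t (αm u x) = αm (t * u) x := fun t u x => by
    rw [hmul_m]; rfl
  have hαmul_o : ∀ (t u : S) (v : Sg.Obj), αo t (αo u v) = αo (t * u) v := fun t u v => by
    rw [hmul_o]; rfl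
  have hα_ι : ∀ (t : S) (v : Sg.Obj), αm t (Sg.ι v) = Sg.ι (αo t v) := by
    intro t v; obtain ⟨hom, ho, hm⟩ := hhom t; rw [← ho, ← hm, hom.map_ι]
  have hα_r : ∀ (t : S) (x : Sg.Mor), Sg.r (αm t x) = αo t (Sg.r x) := by
    intro t x; obtain ⟨hom, ho, hm⟩ := hhom t; rw [← ho, ← hm, hom.map_r]
  have hα_s : ∀ (t : S) (x : Sg.Mor), Sg.s (αm t x) = αo t (Sg.s x) := by
    intro t x; obtain ⟨hom, ho, hm⟩ := hhom t; rw [← ho, ← hm, hom.map_s]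
  have hα_d : ∀ (t : S) (x : Sg.Mor), Sg.d (αm t x) = Sg.d x := by
    intro t x; obtain ⟨hom, _, hm⟩ := hhom t; rw [← hm, hom.map_d]
  have hα_comp : ∀ (t : S) (x y : Sg.Mor) (h : Sg.s x = Sg.r y)
      (h' : Sg.s (αm t x) = Sg.r (αm t y)),
      αm t (Sg.comp x y h) = Sg.comp (αm t x) (αm t y) h' := by
    intro t x y h
    obtain ⟨hom, _, hm⟩ := hhom t
    rw [← hm]
    intro h'
    exact hom.map_comp x y h h'
  have αo_free : ∀ (t u : S) (v : Sg.Obj), αo t v = αo u v → t = u := by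
    intro t u v h
    apply hfree t u (Sg.ι v)
    rw [hα_ι, hα_ι, h]
  -- the fundamental uniqueness lemma
  have uniq : ∀ (σ μ : Sg.Mor) (t : S), μ ∈ F → αm t μ = σ →
      μ = c (q.mor σ) ∧ t = ξ σ := by
    intro σ μ t hμ hact
    obtain ⟨p0, _, hup⟩ := huniq σ
    have h1 := hup (μ, t) ⟨hμ, hact⟩
    have h2 := hup (c (q.mor σ), ξ σ) ⟨hcF _, (hξ σ).symm⟩
    rw [← h2] at h1
    exact ⟨congrArg Prod.fst h1, congrArg Prod.snd h1⟩
  have q_act : ∀ (t : S) (σ : Sg.Mor), q.mor (αm t σ) = q.mor σ :=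
    fun t σ => (hqker_m _ _).mpr ⟨1, t, hone_m' _⟩
  have xi_act : ∀ (t : S) (σ : Sg.Mor), ξ (αm t σ) = t * ξ σ := by
    intro t σ
    exact ((uniq (αm t σ) (c (q.mor σ)) (t * ξ σ) (hcF _)
      (by rw [← hαmul, ← hξ])).2).symm
  have xi_c : ∀ lam : Q.Mor, ξ (c lam) = 1 := by
    intro lam
    exact ((uniq (c lam) (c lam) 1 (hcF _) (hone_m' _)).2).symm
  have ι_inj : ∀ v w : Sg.Obj, Sg.ι v = Sg.ι w → v = w := by
    intro v w h
    have := congrArg Sg.r h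
    rwa [hSg.r_ι, hSg.r_ι] at this
  have ι_injQ : ∀ v w : Q.Obj, Q.ι v = Q.ι w → v = w := by
    intro v w h
    have := congrArg Q.r h
    rwa [hQ.r_ι, hQ.r_ι] at this
  have F_inj : ∀ x ∈ F, ∀ y ∈ F, q.mor x = q.mor y → x = y := by
    intro x hx y hy hxy
    obtain ⟨t, u, htu⟩ := (hqker_m x y).mp hxy
    have h1 := uniq (αm t x) x t hx rfl
    have h2 := uniq (αm t x) y u hy htu.symm
    rw [h1.1, h2.1]
  have r_c : ∀ lam : Q.Mor, Sg.r (c lam) = cv (Q.r lam) := by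
    intro lam
    apply ι_inj
    rw [hcv]
    apply F_inj _ (hFr _ (hcF lam)) _ (hcF _)
    rw [q.map_ι, hcq]
    have : q.obj (Sg.r (c lam)) = Q.r lam := by rw [← q.map_r, hcq]
    rw [this]
  -- ξ of identity at range / source
  have ι_r_eq : ∀ σ : Sg.Mor,
      Sg.ι (Sg.r σ) = αm (ξ σ) (c (Q.ι (Q.r (q.mor σ)))) := by
    intro σ
    conv_lhs => rw [hξ σ]
    rw [hα_r, ← hα_ι, r_c]
    rw [hcv]
  have xi_ι_r : ∀ σ : Sg.Mor, ξ (Sg.ι (Sg.r σ)) = ξ σ := by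
    intro σ
    exact ((uniq _ _ _ (hcF (Q.ι (Q.r (q.mor σ)))) (ι_r_eq σ).symm).2).symm
  have s_c : ∀ lam : Q.Mor, Sg.s (c lam) = αo (η lam) (cv (Q.s lam)) := hη
  have ι_s_eq : ∀ σ : Sg.Mor,
      Sg.ι (Sg.s σ) = αm (ξ σ * η (q.mor σ)) (c (Q.ι (Q.s (q.mor σ)))) := by
    intro σ
    conv_lhs => rw [hξ σ]
    rw [hα_s, s_c, hαmul_o, ← hα_ι, hcv]
  have xi_ι_s : ∀ σ : Sg.Mor, ξ (Sg.ι (Sg.s σ)) = ξ σ * η (q.mor σ) := by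
    intro σ
    exact ((uniq _ _ _ (hcF (Q.ι (Q.s (q.mor σ)))) (ι_s_eq σ).symm).2).symm
  -- η sends identities to 1
  have η_one : ∀ w : Q.Obj, η (Q.ι w) = 1 := by
    intro w
    have h1 := hη (Q.ι w)
    rw [← hcv, hSg.s_ι, hQ.s_ι] at h1
    have h2 : αo (η (Q.ι w)) (cv w) = αo 1 (cv w) := by rw [← h1, hone_o']
    exact αo_free _ _ _ h2
  -- the key factorization lemma
  have fact : ∀ (p q' : Q.Mor) (h : Q.s p = Q.r q'),
      ∃ (μ₂ : Sg.Mor) (h' : Sg.s (c p) = Sg.r μ₂),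
        c (Q.comp p q' h) = Sg.comp (c p) μ₂ h' ∧ q.mor μ₂ = q' ∧
          ξ μ₂ = η p ∧ μ₂ = αm (η p) (c q') := by
    intro p q' h
    set m := Q.comp p q' h with hm
    have hdμ : Sg.d (c m) = Q.d p + Q.d q' := by
      have h3 := q.map_d (c m)
      rw [hcq] at h3
      rw [← h3, hm, hQ.d_comp]
    obtain ⟨⟨μ₁, μ₂⟩, ⟨hsr, hd1, hd2, hcomp⟩, _⟩ := hSg.factor (c m) (Q.d p) (Q.d q') hdμ
    simp only at hsr hd1 hd2 hcomp
    -- compute images under q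
    have hsrQ : Q.s (q.mor μ₁) = Q.r (q.mor μ₂) := by
      rw [q.map_s, q.map_r, hsr]
    have hqcomp : q.mor (c m) = Q.comp (q.mor μ₁) (q.mor μ₂) hsrQ := by
      rw [← hcomp]; exact q.map_comp μ₁ μ₂ hsr hsrQ
    -- unique factorization in Q
    obtain ⟨pq0, _, hu⟩ := hQ.factor m (Q.d p) (Q.d q')
      (by rw [hm, hQ.d_comp])
    have h1 := hu (q.mor μ₁, q.mor μ₂)
      ⟨hsrQ, by rw [q.map_d, hd1], by rw [q.map_d, hd2], by rw [← hqcomp, hcq]⟩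
    have h2 := hu (p, q') ⟨h, rfl, rfl, rfl⟩
    rw [← h2] at h1
    have hqμ₁ : q.mor μ₁ = p := congrArg Prod.fst h1
    have hqμ₂ : q.mor μ₂ = q' := congrArg Prod.snd h1
    -- μ₁ = c p via ξ μ₁ = 1
    have hμ₁rep : μ₁ = αm (ξ μ₁) (c p) := by
      conv_lhs => rw [hξ μ₁]
      rw [hqμ₁]
    have hrμ₁ : Sg.ι (Sg.r μ₁) ∈ F := by
      have : Sg.r (c m) = Sg.r μ₁ := by rw [← hcomp, hSg.r_comp]
      rw [← this]
      exact hFr _ (hcF m)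
    have hιrμ₁ : Sg.ι (Sg.r μ₁) = αm (ξ μ₁) (c (Q.ι (Q.r p))) := by
      conv_lhs => rw [hμ₁rep]
      rw [hα_r, ← hα_ι, r_c, hcv]
    have hξμ₁1 : ξ μ₁ = 1 := by
      have e1 := uniq (Sg.ι (Sg.r μ₁)) _ _ (hcF (Q.ι (Q.r p))) hιrμ₁.symm
      have e2 := uniq (Sg.ι (Sg.r μ₁)) _ 1 hrμ₁ (hone_m' _)
      rw [e1.2, ← e2.2]
    have hμ₁c : μ₁ = c p := by rw [hμ₁rep, hξμ₁1, hone_m']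
    subst hμ₁c
    -- ξ μ₂ = η p
    have hμ₂rep : μ₂ = αm (ξ μ₂) (c q') := by
      conv_lhs => rw [hξ μ₂]
      rw [hqμ₂]
    have hrμ₂ : Sg.r μ₂ = αo (ξ μ₂) (cv (Q.r q')) := by
      conv_lhs => rw [hμ₂rep]
      rw [hα_r, r_c]
    have hξμ₂ : ξ μ₂ = η p := by
      apply αo_free _ _ (cv (Q.r q'))
      rw [← hrμ₂, ← hsr, hη p, h]
    exact ⟨μ₂, hsr, hcomp.symm, hqμ₂, hξμ₂, by rw [← hξμ₂, ← hμ₂rep]⟩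
  -- η is multiplicative
  have η_mul : ∀ (p q' : Q.Mor) (h : Q.s p = Q.r q'),
      η (Q.comp p q' h) = η p * η q' := by
    intro p q' h
    obtain ⟨μ₂, h', hceq, hqμ₂, hξμ₂, hμ₂⟩ := fact p q' h
    have h1 : Sg.s (c (Q.comp p q' h)) = Sg.s μ₂ := by
      rw [hceq, hSg.s_comp]
    rw [hη (Q.comp p q' h), hQ.s_comp] at h1
    rw [hμ₂, hα_s, hη q'] at h1
    -- careful: hQ.s_comp rewrite above should apply only where needed
    apply αo_free _ _ (cv (Q.s q'))
    rw [h1, hαmul_o]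
  -- ξ of a composite equals ξ of the first factor
  have ξ_comp : ∀ (a b : Sg.Mor) (hab : Sg.s a = Sg.r b),
      ξ (Sg.comp a b hab) = ξ a := by
    intro a b hab
    have hpq : Q.s (q.mor a) = Q.r (q.mor b) := by rw [q.map_s, q.map_r, hab]
    have hqτ : q.mor (Sg.comp a b hab) = Q.comp (q.mor a) (q.mor b) hpq :=
      q.map_comp a b hab hpq
    obtain ⟨μ₂, h', hceq, hqμ₂, hξμ₂, hμ₂⟩ := fact (q.mor a) (q.mor b) hpq
    set τ := Sg.comp a b hab with hτ
    -- τ = αm (ξ τ) (comp (c (q.mor a)) μ₂)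
    have hca : Sg.s (αm (ξ τ) (c (q.mor a))) = Sg.r (αm (ξ τ) μ₂) := by
      rw [hα_s, hα_r, h']
    have hτrep : τ = Sg.comp (αm (ξ τ) (c (q.mor a))) (αm (ξ τ) μ₂) hca := by
      rw [← hα_comp (ξ τ) _ _ h' hca, ← hceq, ← hqτ, ← hξ]
    -- uniqueness of factorization in Sg
    have hda : Sg.d (αm (ξ τ) (c (q.mor a))) = Sg.d a := by
      rw [hα_d, ← q.map_d a, ← q.map_d (c (q.mor a)), hcq]
    have hdb : Sg.d (αm (ξ τ) μ₂) = Sg.d b := by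
      rw [hα_d, ← q.map_d μ₂, hqμ₂, ← q.map_d b]
    obtain ⟨pq0, _, hu⟩ := hSg.factor τ (Sg.d a) (Sg.d b)
      (by rw [hτ, hSg.d_comp])
    have h1 := hu (a, b) ⟨hab, rfl, rfl, rfl⟩
    have h2 := hu (αm (ξ τ) (c (q.mor a)), αm (ξ τ) μ₂) ⟨hca, hda, hdb, hτrep.symm⟩
    rw [← h2] at h1
    have ha : a = αm (ξ τ) (c (q.mor a)) := congrArg Prod.fst h1
    have ha' : a = αm (ξ a) (c (q.mor a)) := hξ a
    exact hfree (ξ τ) (ξ a) (c (q.mor a)) (by rw [← ha, ← ha'])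
  refine ⟨η_one, η_mul, ?_⟩
  -- the isomorphism
  refine ⟨{ obj := fun v => (q.obj v, ξ (Sg.ι v)),
            mor := fun σ => (q.mor σ, ξ σ),
            map_r := ?_, map_s := ?_, map_ι := ?_, map_comp := ?_, map_d := ?_ },
          rfl, rfl, ?_, ?_, ?_, ?_⟩
  · intro σ
    show (Q.r (q.mor σ), ξ σ) = (q.obj (Sg.r σ), ξ (Sg.ι (Sg.r σ)))
    rw [q.map_r, xi_ι_r]
  · intro σ
    show (Q.s (q.mor σ), ξ σ * η (q.mor σ)) = (q.obj (Sg.s σ), ξ (Sg.ι (Sg.s σ)))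
    rw [q.map_s, xi_ι_s]
  · intro v
    show (q.mor (Sg.ι v), ξ (Sg.ι v)) = (Q.ι (q.obj v), ξ (Sg.ι v))
    rw [q.map_ι]
  · intro p q' h h'
    show (q.mor (Sg.comp p q' h), ξ (Sg.comp p q' h)) = (Q.comp (q.mor p) (q.mor q') _, ξ p)
    have := q.map_comp p q' h (by rw [q.map_s, q.map_r, h])
    rw [this, ξ_comp]
  · intro σ
    show Q.d (q.mor σ) = Sg.d σ
    exact q.map_d σ
  · -- mor bijective
    constructor
    · intro x y hxy
      have h1 : q.mor x = q.mor y := congrArg Prod.fst hxy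
      have h2 : ξ x = ξ y := congrArg Prod.snd hxy
      rw [hξ x, hξ y, h1, h2]
    · rintro ⟨lam, t⟩
      refine ⟨αm t (c lam), ?_⟩
      have h1 : q.mor (αm t (c lam)) = lam := by rw [q_act, hcq]
      have h2 : ξ (αm t (c lam)) = t := by rw [xi_act, xi_c, mul_one]
      simp [h1, h2] <;> rfl
  · -- obj bijective
    constructor
    · intro v w hvw
      have h1 : q.obj v = q.obj w := congrArg Prod.fst hvw
      have h2 : ξ (Sg.ι v) = ξ (Sg.ι w) := congrArg Prod.snd hvw
      have h3 : q.mor (Sg.ι v) = q.mor (Sg.ι w) := by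
        rw [q.map_ι, q.map_ι, h1]
      have h4 : Sg.ι v = Sg.ι w := by
        rw [hξ (Sg.ι v), hξ (Sg.ι w), h2, h3]
      exact ι_inj _ _ h4
    · rintro ⟨w, t⟩
      refine ⟨αo t (cv w), ?_⟩
      have hι : Sg.ι (αo t (cv w)) = αm t (c (Q.ι w)) := by
        rw [← hα_ι, hcv]
      have h1 : q.obj (αo t (cv w)) = w := by
        apply ι_injQ
        rw [← q.map_ι, hι, q_act, hcq]
      have h2 : ξ (Sg.ι (αo t (cv w))) = t := by
        rw [hι, xi_act, xi_c, mul_one]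
      simp [h1, h2] <;> rfl
  · intro lam t
    have h1 : q.mor (αm t (c lam)) = lam := by rw [q_act, hcq]
    have h2 : ξ (αm t (c lam)) = t := by rw [xi_act, xi_c, mul_one]
    rw [h1, h2]
  · intro t σ
    rw [q_act, xi_act]
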